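/- Let 0 ≤ x ≤ t, set m = t − x and n = x + 1, and let Π be random with each point of ℤ₊×ℤ₊ marked independently with probability p ∈ (0,1). Then for every integer h ≥ 0, Prob(h_t^Π(x) ≤ h) = Σ_{k=0}^{mn} C(mn,k) p^k (1−p)^{mn−k} · Prob(L_{m,n,k} ≤ h), where L_{m,n,k} denotes L(A) for A chosen uniformly at random among m×n 0-1 matrices with exactly k entries equal to 1. -/

import Mathlib

open MeasureTheory
open scoped Classical

/-- The oriented digital boiling (ODB) height function `h_t^Π(x)`, with corner
initialization. -/
noncomputable def odbHeight (P : Set (ℕ × ℕ)) : ℕ → ℤ → WithBot ℤ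
  | 0 => fun x => if x = 0 then (0 : WithBot ℤ) else ⊥
  | (t + 1) => fun x =>
      if x < 0 then ⊥
      else if odbHeight P t (x - 1) > odbHeight P t x then odbHeight P t (x - 1)
      else if (x.toNat, t) ∈ P then odbHeight P t x + 1
      else odbHeight P t x

/-- `L(A)`: the maximal length of an increasing path in a 0-1 matrix `A`, i.e. a sequence
of positions with entry 1 whose row indices strictly increase and whose column indices
weakly increase. -/
noncomputable def pathLen {m n : ℕ} (A : Fin m × Fin n → Bool) : ℕ :=
  sSup {k | ∃ f : Fin k → Fin m × Fin n,
    (∀ i, A (f i) = true) ∧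
    ∀ i j : Fin k, i < j → (f i).1 < (f j).1 ∧ (f i).2 ≤ (f j).2}

/-- The number of entries equal to 1 in a 0-1 matrix. -/
def onesCount {m n : ℕ} (A : Fin m × Fin n → Bool) : ℕ :=
  (Finset.univ.filter fun q => A q = true).card

/-- The number of `m × n` 0-1 matrices with exactly `k` ones and longest increasing path
of length at most `h`. -/
noncomputable def matCount (m n k h : ℕ) : ℕ :=
  Nat.card {A : Fin m × Fin n → Bool // onesCount A = k ∧ pathLen A ≤ h}

namespace ODBAux


def PathSet (B : ℕ × ℕ → Bool) (M N : ℕ) : Set ℕ :=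
  {k | ∃ f : Fin k → ℕ × ℕ,
    (∀ i, (f i).1 < M ∧ (f i).2 < N ∧ B (f i) = true) ∧
    ∀ i j : Fin k, i < j → (f i).1 < (f j).1 ∧ (f i).2 ≤ (f j).2}

noncomputable def LL (B : ℕ × ℕ → Bool) (M N : ℕ) : ℕ := sSup (PathSet B M N)

lemma zero_mem (B : ℕ × ℕ → Bool) (M N : ℕ) : 0 ∈ PathSet B M N :=
  ⟨Fin.elim0, fun i => i.elim0, fun i => i.elim0⟩

lemma le_of_mem {B : ℕ × ℕ → Bool} {M N k : ℕ} (hk : k ∈ PathSet B M N) : k ≤ M := by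
  obtain ⟨f, hf, hmono⟩ := hk
  have hs : StrictMono (fun i : Fin k => (⟨(f i).1, (hf i).1⟩ : Fin M)) := fun i j hij =>
    Fin.mk_lt_mk.2 (hmono i j hij).1
  simpa using Fintype.card_le_of_injective _ hs.injective

lemma bddAbove (B : ℕ × ℕ → Bool) (M N : ℕ) : BddAbove (PathSet B M N) :=
  ⟨M, fun _ hk => le_of_mem hk⟩

lemma LL_mem (B : ℕ × ℕ → Bool) (M N : ℕ) : LL B M N ∈ PathSet B M N :=
  Nat.sSup_mem ⟨0, zero_mem B M N⟩ (bddAbove B M N)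

lemma le_LL {B : ℕ × ℕ → Bool} {M N k : ℕ} (hk : k ∈ PathSet B M N) : k ≤ LL B M N :=
  le_csSup (bddAbove B M N) hk

lemma PathSet_mono {B : ℕ × ℕ → Bool} {M N M' N' : ℕ} (hM : M ≤ M') (hN : N ≤ N') :
    PathSet B M N ⊆ PathSet B M' N' := by
  rintro k ⟨f, hf, hmono⟩
  exact ⟨f, fun i => ⟨lt_of_lt_of_le (hf i).1 hM, lt_of_lt_of_le (hf i).2.1 hN, (hf i).2.2⟩, hmono⟩

lemma LL_mono {B : ℕ × ℕ → Bool} {M N M' N' : ℕ} (hM : M ≤ M') (hN : N ≤ N') :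
    LL B M N ≤ LL B M' N' :=
  le_LL (PathSet_mono hM hN (LL_mem B M N))

lemma LL_zero_left (B : ℕ × ℕ → Bool) (N : ℕ) : LL B 0 N = 0 :=
  Nat.le_zero.1 (le_of_mem (LL_mem B 0 N))

lemma mem_zero_right {B : ℕ × ℕ → Bool} {M k : ℕ} (hk : k ∈ PathSet B M 0) : k = 0 := by
  by_contra hne
  obtain ⟨f, hf, _⟩ := hk
  exact absurd (hf ⟨0, Nat.pos_of_ne_zero hne⟩).2.1 (Nat.not_lt_zero _)

lemma LL_zero_right (B : ℕ × ℕ → Bool) (M : ℕ) : LL B M 0 = 0 :=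
  mem_zero_right (LL_mem B M 0)

-- K1: dropping last row costs at most 1
lemma mem_drop_row {B : ℕ × ℕ → Bool} {M N k : ℕ} (hk : k ∈ PathSet B (M + 1) N) :
    k ≤ LL B M N + 1 := by
  obtain ⟨f, hf, hmono⟩ := hk
  cases k with
  | zero => exact Nat.zero_le _
  | succ k' =>
    have hmem : k' ∈ PathSet B M N := by
      refine ⟨fun i => f i.castSucc, fun i => ?_, fun i j hij => hmono _ _ (by simpa using hij)⟩
      refine ⟨?_, (hf _).2.1, (hf _).2.2⟩
      have h1 := (hmono i.castSucc (Fin.last k') (Fin.castSucc_lt_last i)).1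
      have h2 := (hf (Fin.last k')).1
      show (f i.castSucc).1 < M
      omega
    exact Nat.succ_le_succ (le_LL hmem)

-- K2
lemma mem_corner_false {B : ℕ × ℕ → Bool} {M N k : ℕ} (hB : B (M, N) = false)
    (hk : k ∈ PathSet B (M + 1) (N + 1)) : k ≤ max (LL B (M + 1) N) (LL B M (N + 1)) := by
  obtain ⟨f, hf, hmono⟩ := hk
  cases k with
  | zero => exact Nat.zero_le _
  | succ k' =>
    by_cases hc : (f (Fin.last k')).1 < M
    · -- path stays in first M rows
      refine le_max_of_le_right (le_LL ⟨f, fun i => ⟨?_, (hf i).2.1, (hf i).2.2⟩, hmono⟩)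
      rcases lt_or_eq_of_le (Fin.le_last i) with hlt | heq
      · have := (hmono i (Fin.last k') hlt).1; omega
      · rw [heq]; exact hc
    · -- last cell in last row; its column < N, else corner would be true
      have hc1 : (f (Fin.last k')).1 = M := by have := (hf (Fin.last k')).1; omega
      have hc2 : (f (Fin.last k')).2 < N := by
        rcases Nat.lt_succ_iff_lt_or_eq.1 (hf (Fin.last k')).2.1 with hlt | heq
        · exact hlt
        · exfalso
          have hBtrue := (hf (Fin.last k')).2.2
          have hcell : f (Fin.last k') = (M, N) := Prod.ext hc1 heq
          rw [hcell, hB] at hBtrue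
          exact Bool.false_ne_true hBtrue
      refine le_max_of_le_left (le_LL ⟨f, fun i => ⟨(hf i).1, ?_, (hf i).2.2⟩, hmono⟩)
      rcases lt_or_eq_of_le (Fin.le_last i) with hlt | heq
      · have := (hmono i (Fin.last k') hlt).2; omega
      · rw [heq]; exact hc2

-- K3
lemma corner_append {B : ℕ × ℕ → Bool} {M N : ℕ} (hB : B (M, N) = true) :
    LL B M (N + 1) + 1 ≤ LL B (M + 1) (N + 1) := by
  obtain ⟨f, hf, hmono⟩ := LL_mem B M (N + 1)
  apply le_LL
  refine ⟨fun i => if h : (i : ℕ) < LL B M (N + 1) then f ⟨i, h⟩ else (M, N), ?_, ?_⟩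
  · intro i
    by_cases h : (i : ℕ) < LL B M (N + 1)
    · simp only [dif_pos h]
      exact ⟨Nat.lt_succ_of_lt (hf _).1, (hf _).2.1, (hf _).2.2⟩
    · simp only [dif_neg h]
      exact ⟨Nat.lt_succ_self _, Nat.lt_succ_self _, hB⟩
  · intro i j hij
    have hij' : (i : ℕ) < (j : ℕ) := hij
    by_cases hi : (i : ℕ) < LL B M (N + 1)
    · by_cases hj : (j : ℕ) < LL B M (N + 1)
      · simp only [dif_pos hi, dif_pos hj]
        exact hmono ⟨i, hi⟩ ⟨j, hj⟩ hij'
      · simp only [dif_pos hi, dif_neg hj]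
        exact ⟨(hf _).1, Nat.lt_succ_iff.1 (hf _).2.1⟩
    · exfalso
      have := j.isLt
      omega

-- main recursion
lemma LL_rec (B : ℕ × ℕ → Bool) (M N : ℕ) :
    LL B (M + 1) (N + 1) =
      if LL B M (N + 1) < LL B (M + 1) N then LL B (M + 1) N
      else LL B M (N + 1) + (if B (M, N) = true then 1 else 0) := by
  have h2le : LL B M (N + 1) ≤ LL B (M + 1) (N + 1) := LL_mono (Nat.le_succ _) le_rfl
  have h1le : LL B (M + 1) N ≤ LL B (M + 1) (N + 1) := LL_mono le_rfl (Nat.le_succ _)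
  have hdrop : LL B (M + 1) (N + 1) ≤ LL B M (N + 1) + 1 :=
    mem_drop_row (LL_mem B (M + 1) (N + 1))
  split_ifs with hcmp hcorner
  · omega
  · -- corner true
    have := corner_append (B := B) (M := M) (N := N) hcorner
    omega
  · have hcorner' : B (M, N) = false := Bool.eq_false_iff.2 hcorner
    have := mem_corner_false hcorner' (LL_mem B (M + 1) (N + 1))
    omega


noncomputable def BP (P : Set (ℕ × ℕ)) : ℕ × ℕ → Bool := fun q => decide ((q.2, q.1 + q.2) ∈ P)

lemma odb_neg {P : Set (ℕ × ℕ)} {t : ℕ} {x : ℤ} (hx : x < 0) : odbHeight P t x = ⊥ := by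
  cases t with
  | zero => simp only [odbHeight, if_neg (by omega : ¬ x = 0)]
  | succ t => simp only [odbHeight, if_pos hx]

lemma odb_gt {P : Set (ℕ × ℕ)} : ∀ (t : ℕ) (x : ℤ), (t : ℤ) < x → odbHeight P t x = ⊥ := by
  intro t
  induction t with
  | zero => intro x hx; simp only [odbHeight, if_neg (by omega : ¬ x = 0)]
  | succ t ih =>
    intro x hx
    have h1 : odbHeight P t (x - 1) = ⊥ := ih _ (by omega)
    have h2 : odbHeight P t x = ⊥ := ih _ (by omega)
    simp only [odbHeight, if_neg (by omega : ¬ x < 0), h1, h2, gt_iff_lt, lt_irrefl, if_false]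
    split <;> simp

lemma odb_eq_LL (P : Set (ℕ × ℕ)) :
    ∀ (t x : ℕ), x ≤ t →
      odbHeight P t (x : ℤ) = (((LL (BP P) (t - x) (x + 1) : ℤ)) : WithBot ℤ) := by
  intro t
  induction t with
  | zero =>
    intro x hx
    interval_cases x
    simp [odbHeight, LL_zero_left]
  | succ t ih =>
    intro x hx
    rcases Nat.lt_or_ge x (t + 1) with hxt | hxt
    · -- x ≤ t
      have hxle : x ≤ t := by omega
      rcases Nat.eq_zero_or_pos x with rfl | hxpos
      · -- x = 0
        have hneg : odbHeight P t (((0:ℕ) : ℤ) - 1) = ⊥ := odb_neg (by omega)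
        have hIH := ih 0 (Nat.zero_le t)
        have hrec := LL_rec (BP P) t 0
        rw [LL_zero_right, if_neg (Nat.not_lt_zero _)] at hrec
        have hB : (BP P (t, 0) = true) ↔ ((0, t) ∈ P) := by simp [BP]
        show (if ((0:ℕ):ℤ) < 0 then ⊥
          else if odbHeight P t (((0:ℕ):ℤ) - 1) > odbHeight P t ((0:ℕ):ℤ) then
            odbHeight P t (((0:ℕ):ℤ) - 1)
          else if ((((0:ℕ):ℤ)).toNat, t) ∈ P then odbHeight P t ((0:ℕ):ℤ) + 1
          else odbHeight P t ((0:ℕ):ℤ)) = _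
        rw [if_neg (by omega : ¬ ((0:ℕ):ℤ) < 0), hneg,
          if_neg (by simp : ¬ ((⊥ : WithBot ℤ) > odbHeight P t ((0:ℕ):ℤ))), hIH]
        have h10 : t + 1 - 0 = t + 1 := rfl
        rw [h10, hrec]
        have htn : (((0:ℕ):ℤ)).toNat = 0 := by simp
        rw [htn]
        simp only [Nat.sub_zero] at *
        by_cases hmem : (0, t) ∈ P
        · rw [if_pos hmem, if_pos (hB.2 hmem)]
          push_cast
          ring
        · rw [if_neg hmem, if_neg (by simpa [hB] using hmem)]
          norm_num
      · -- 1 ≤ x ≤ t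
        have hIH1 := ih (x - 1) (by omega)
        have hIH2 := ih x hxle
        have hcast : ((x - 1 : ℕ) : ℤ) = (x : ℤ) - 1 := by omega
        rw [hcast] at hIH1
        have hidx1 : t - (x - 1) = (t - x) + 1 := by omega
        have hidx2 : (x - 1) + 1 = x := by omega
        rw [hidx1, hidx2] at hIH1
        have hrec := LL_rec (BP P) (t - x) x
        have hB : (BP P (t - x, x) = true) ↔ ((x, t) ∈ P) := by
          simp [BP, Nat.sub_add_cancel hxle]
        have hidx3 : t + 1 - x = (t - x) + 1 := by omega
        show (if (x:ℤ) < 0 then ⊥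
          else if odbHeight P t ((x:ℤ) - 1) > odbHeight P t (x:ℤ) then
            odbHeight P t ((x:ℤ) - 1)
          else if (((x:ℤ)).toNat, t) ∈ P then odbHeight P t (x:ℤ) + 1
          else odbHeight P t (x:ℤ)) = _
        rw [if_neg (by omega : ¬ (x:ℤ) < 0), hidx3, hrec, hIH1, hIH2]
        have htn : ((x:ℤ)).toNat = x := by simp
        rw [htn]
        have hlt : ((((LL (BP P) (t - x) (x + 1) : ℕ) : ℤ) : WithBot ℤ) <
            (((LL (BP P) (t - x + 1) x : ℕ) : ℤ) : WithBot ℤ)) ↔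
            (LL (BP P) (t - x) (x + 1) < LL (BP P) (t - x + 1) x) := by
          rw [WithBot.coe_lt_coe]; exact Nat.cast_lt
        simp only [gt_iff_lt]
        simp only [hB] at hrec ⊢
        split_ifs with h1 h2 h3 h4 h5 h6 <;>
          rw [hlt] at h1 <;> first
            | rfl
            | tauto
            | norm_cast
    · -- x = t + 1
      have hx1 : x = t + 1 := by omega
      subst hx1
      have h0 : odbHeight P t ((t : ℕ) : ℤ) = (((0:ℕ) : ℤ) : WithBot ℤ) := by
        have := ih t le_rfl
        rwa [Nat.sub_self, LL_zero_left] at this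
      have hbot : odbHeight P t (((t + 1 : ℕ)) : ℤ) = ⊥ :=
        odb_gt t _ (by exact_mod_cast t.lt_succ_self)
      show (if ((t + 1 : ℕ):ℤ) < 0 then ⊥
        else if odbHeight P t (((t + 1 : ℕ):ℤ) - 1) > odbHeight P t ((t + 1 : ℕ):ℤ) then
          odbHeight P t (((t + 1 : ℕ):ℤ) - 1)
        else if ((((t + 1 : ℕ):ℤ)).toNat, t) ∈ P then odbHeight P t ((t + 1 : ℕ):ℤ) + 1
        else odbHeight P t ((t + 1 : ℕ):ℤ)) = _
      have hc : ((t + 1 : ℕ):ℤ) - 1 = ((t : ℕ) : ℤ) := by push_cast; ring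
      rw [if_neg (by omega : ¬ ((t + 1 : ℕ):ℤ) < 0), hc, h0, hbot,
        if_pos (WithBot.bot_lt_coe _), Nat.sub_self, LL_zero_left]


lemma pathLen_eq_LL {M N : ℕ} (B : ℕ × ℕ → Bool) :
    pathLen (fun z : Fin M × Fin N => B ((z.1 : ℕ), (z.2 : ℕ))) = LL B M N := by
  unfold pathLen LL
  congr 1
  ext k
  constructor
  · rintro ⟨f, h1, h2⟩
    refine ⟨fun i => (((f i).1 : ℕ), ((f i).2 : ℕ)), fun i => ⟨(f i).1.isLt, (f i).2.isLt, h1 i⟩,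
      fun i j hij => ?_⟩
    exact ⟨(h2 i j hij).1, (h2 i j hij).2⟩
  · rintro ⟨f, h1, h2⟩
    refine ⟨fun i => (⟨(f i).1, (h1 i).1⟩, ⟨(f i).2, (h1 i).2.1⟩), fun i => ?_, fun i j hij => ?_⟩
    · simpa using (h1 i).2.2
    · exact ⟨(h2 i j hij).1, (h2 i j hij).2⟩


lemma pathLen_eq_LL' {M N : ℕ} (B : ℕ × ℕ → Bool) (A : Fin M × Fin N → Bool)
    (hA : ∀ z, A z = B ((z.1 : ℕ), (z.2 : ℕ))) : pathLen A = LL B M N := by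
  have : A = fun z => B ((z.1 : ℕ), (z.2 : ℕ)) := funext hA
  rw [this]; exact pathLen_eq_LL B

def iota (m n : ℕ) : Fin m × Fin n → ℕ × ℕ := fun z => ((z.2 : ℕ), (z.1 : ℕ) + (z.2 : ℕ))

lemma iota_inj (m n : ℕ) : Function.Injective (iota m n) := by
  rintro ⟨i, j⟩ ⟨i', j'⟩ hz
  simp only [iota, Prod.mk.injEq] at hz
  obtain ⟨h1, h2⟩ := hz
  have : (i : ℕ) = (i' : ℕ) := by omega
  exact Prod.ext (Fin.ext this) (Fin.ext h1)


end ODBAux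

open ODBAux

/-- Let `Π` be a random subset of `ℤ₊ × ℤ₊` where each point is marked independently with
probability `p`. Then for `0 ≤ x ≤ t`, with `m = t − x` and `n = x + 1`,
`Prob(h_t(x) ≤ h) = Σ_{k=0}^{mn} C(mn,k) p^k (1−p)^{mn−k} · Prob(L_{m,n,k} ≤ h)`,
where `Prob(L_{m,n,k} ≤ h)` is the proportion, among `m × n` 0-1 matrices with exactly
`k` ones, of those whose longest increasing path has length at most `h`. -/
theorem odb_distribution_binomial_mixture {p : ℝ} (hp0 : 0 < p) (hp1 : p < 1)
    (μ : Measure (ℕ × ℕ → Bool)) [IsProbabilityMeasure μ]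
    (hμ : ∀ (S : Finset (ℕ × ℕ)) (f : ℕ × ℕ → Bool),
      μ {ω | ∀ q ∈ S, ω q = f q} =
        ∏ q ∈ S, ENNReal.ofReal (if f q then p else 1 - p))
    (x t : ℕ) (hxt : x ≤ t) (h : ℕ) :
    (μ {ω | odbHeight {q | ω q = true} t (x : ℤ) ≤ ((h : ℤ) : WithBot ℤ)}).toReal =
      ∑ k ∈ Finset.range ((t - x) * (x + 1) + 1),
        (Nat.choose ((t - x) * (x + 1)) k : ℝ) * p ^ k *
          (1 - p) ^ ((t - x) * (x + 1) - k) *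
          ((matCount (t - x) (x + 1) k h : ℝ) / (Nat.choose ((t - x) * (x + 1)) k : ℝ)) := by
  classical
  set m := t - x with hm
  set n := x + 1 with hn
  have hq0 : (0:ℝ) < 1 - p := by linarith
  -- Step A: rewrite the event
  have hev : {ω : ℕ × ℕ → Bool | odbHeight {q | ω q = true} t (x : ℤ) ≤ ((h : ℤ) : WithBot ℤ)}
      = {ω : ℕ × ℕ → Bool | pathLen (fun z : Fin m × Fin n => ω (iota m n z)) ≤ h} := by
    ext ω
    simp only [Set.mem_setOf_eq]
    rw [odb_eq_LL {q | ω q = true} t x hxt]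
    have hBP : BP {q | ω q = true} = fun q : ℕ × ℕ => ω (q.2, q.1 + q.2) := by
      funext q; simp [BP]
    rw [hBP]
    rw [pathLen_eq_LL' (fun q : ℕ × ℕ => ω (q.2, q.1 + q.2))
      (fun z : Fin m × Fin n => ω (iota m n z)) (fun z => rfl)]
    constructor
    · intro hle; exact_mod_cast hle
    · intro hle; exact_mod_cast hle
  -- Step B: decompose into cylinders
  set F : Finset (Fin m × Fin n → Bool) := Finset.univ.filter (fun A => pathLen A ≤ h) with hF
  set EA : (Fin m × Fin n → Bool) → Set (ℕ × ℕ → Bool) :=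
    fun A => {ω | ∀ z, ω (iota m n z) = A z} with hEA
  have hunion : {ω : ℕ × ℕ → Bool | pathLen (fun z : Fin m × Fin n => ω (iota m n z)) ≤ h}
      = ⋃ A ∈ F, EA A := by
    ext ω
    simp only [Set.mem_setOf_eq, Set.mem_iUnion, hEA, hF, Finset.mem_filter, Finset.mem_univ,
      true_and]
    constructor
    · intro hω
      exact ⟨fun z => ω (iota m n z), hω, fun z => rfl⟩
    · rintro ⟨A, hA, hωA⟩
      have : (fun z => ω (iota m n z)) = A := funext hωA
      rw [this]; exact hA
  have hmeasEA : ∀ A, MeasurableSet (EA A) := by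
    intro A
    have : EA A = ⋂ z, (fun ω : ℕ × ℕ → Bool => ω (iota m n z)) ⁻¹' {A z} := by
      ext ω; simp [hEA, Set.mem_iInter]
    rw [this]
    exact MeasurableSet.iInter fun z => (measurable_pi_apply _) (measurableSet_singleton _)
  have hdis : (F : Set (Fin m × Fin n → Bool)).PairwiseDisjoint EA := by
    intro A _ A' _ hne
    rw [Function.onFun, Set.disjoint_left]
    intro ω hω hω'
    exact hne (funext fun z => (hω z).symm.trans (hω' z))
  have hmuEA : ∀ A : Fin m × Fin n → Bool,
      μ (EA A) = ENNReal.ofReal p ^ onesCount A *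
        ENNReal.ofReal (1 - p) ^ (m * n - onesCount A) := by
    intro A
    set S : Finset (ℕ × ℕ) := Finset.image (iota m n) Finset.univ with hS
    set f : ℕ × ℕ → Bool := Function.extend (iota m n) A (fun _ => false) with hf
    have hfval : ∀ z, f (iota m n z) = A z := fun z =>
      Function.Injective.extend_apply (iota_inj m n) _ _ _
    have hset : EA A = {ω | ∀ q ∈ S, ω q = f q} := by
      ext ω
      simp only [hEA, Set.mem_setOf_eq]
      constructor
      · intro hω q hq
        obtain ⟨z, _, rfl⟩ := Finset.mem_image.1 hq
        rw [hω z, hfval z]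
      · intro hω z
        have := hω (iota m n z) (Finset.mem_image_of_mem _ (Finset.mem_univ z))
        rw [this, hfval z]
    rw [hset, hμ S f, hS]
    rw [Finset.prod_image (fun z _ z' _ hzz => iota_inj m n hzz)]
    have hcongr : ∀ z ∈ Finset.univ,
        ENNReal.ofReal (if f (iota m n z) then p else 1 - p)
          = if A z = true then ENNReal.ofReal p else ENNReal.ofReal (1 - p) := by
      intro z _
      rw [hfval z]
      split_ifs <;> rfl
    rw [Finset.prod_congr rfl hcongr, Finset.prod_ite, Finset.prod_const, Finset.prod_const]
    have hcard1 : (Finset.univ.filter fun z => A z = true).card = onesCount A := rfl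
    have hcard2 : (Finset.univ.filter fun z => ¬ (A z = true)).card = m * n - onesCount A := by
      have hadd := Finset.card_filter_add_card_filter_not
        (s := (Finset.univ : Finset (Fin m × Fin n))) (p := fun z => A z = true)
      have huniv : (Finset.univ : Finset (Fin m × Fin n)).card = m * n := by
        simp [Fintype.card_prod]
      rw [hcard1] at hadd
      omega
    rw [hcard1, hcard2]
  -- Step C: sum over cylinders
  rw [hev, hunion, measure_biUnion_finset hdis (fun A _ => hmeasEA A)]
  have hne : ∀ A ∈ F, μ (EA A) ≠ ⊤ := by
    intro A _
    rw [hmuEA A]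
    exact ENNReal.mul_ne_top (ENNReal.pow_ne_top ENNReal.ofReal_ne_top)
      (ENNReal.pow_ne_top ENNReal.ofReal_ne_top)
  rw [ENNReal.toReal_sum hne]
  have hterm : ∀ A ∈ F, (μ (EA A)).toReal
      = p ^ onesCount A * (1 - p) ^ (m * n - onesCount A) := by
    intro A _
    rw [hmuEA A, ENNReal.toReal_mul, ENNReal.toReal_pow, ENNReal.toReal_pow,
      ENNReal.toReal_ofReal hp0.le, ENNReal.toReal_ofReal hq0.le]
  rw [Finset.sum_congr rfl hterm]
  -- Step D: group by number of ones
  have hmap : ∀ A ∈ F, onesCount A ∈ Finset.range (m * n + 1) := by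
    intro A _
    rw [Finset.mem_range]
    have : onesCount A ≤ Fintype.card (Fin m × Fin n) := Finset.card_filter_le _ _
    simp [Fintype.card_prod] at this
    omega
  rw [← Finset.sum_fiberwise_of_maps_to hmap
    (fun A => p ^ onesCount A * (1 - p) ^ (m * n - onesCount A))]
  refine Finset.sum_congr rfl (fun k hk => ?_)
  have hkle : k ≤ m * n := by
    rw [Finset.mem_range] at hk; omega
  have hinner : ∑ A ∈ F.filter (fun A => onesCount A = k),
      p ^ onesCount A * (1 - p) ^ (m * n - onesCount A)
      = ((F.filter (fun A => onesCount A = k)).card : ℝ) * (p ^ k * (1 - p) ^ (m * n - k)) := by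
    rw [Finset.sum_congr rfl (fun A hA => ?_), Finset.sum_const, nsmul_eq_mul]
    rw [(Finset.mem_filter.1 hA).2]
  rw [hinner]
  -- identify the count with matCount
  have hcardmc : (F.filter (fun A => onesCount A = k)).card = matCount m n k h := by
    rw [matCount, Nat.card_eq_fintype_card, Fintype.card_subtype]
    congr 1
    apply Finset.ext
    intro A
    simp only [hF, Finset.mem_filter, Finset.mem_univ, true_and]
    tauto
  rw [hcardmc]
  -- final algebra
  have hC : ((Nat.choose (m * n) k : ℕ) : ℝ) ≠ 0 :=
    Nat.cast_ne_zero.2 (Nat.choose_pos hkle).ne'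
  field_simp
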